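/- Let k ≥ 2, let F : ℝ^k → ℝ be interchangeable (i.e., invariant under all permutations of its arguments) and three times continuously differentiable on a neighborhood of the diagonal point a·𝟙 = (a,…,a), set α := (1/2)(∂²F/∂μ_1∂μ_1(a·𝟙) − ∂²F/∂μ_1∂μ_2(a·𝟙)), and let h = (h_1,…,h_k) ∈ ℝ^k satisfy ∑_{i=1}^k h_i = 0. Then, as ε → 0, F(a·𝟙 + εh) = F(a·𝟙) + α ε² ∑_{i=1}^k h_i² + O(ε³). -/

import Mathlib

open Asymptotics Filter


lemma isBigO_succ_of_deriv {u u' : ℝ → ℝ} {m : ℕ}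
    (hu0 : u 0 = 0)
    (hder : ∀ᶠ t in nhds (0:ℝ), HasDerivAt u (u' t) t)
    (hO : u' =O[nhds (0:ℝ)] fun t => t ^ m) :
    u =O[nhds (0:ℝ)] fun t => t ^ (m+1) := by
  obtain ⟨C, hC⟩ := hO.bound
  set C' := max C 0 with hC'
  have hC'nn : 0 ≤ C' := le_max_right _ _
  have hC2 : ∀ᶠ y in nhds (0:ℝ), ‖u' y‖ ≤ C' * |y| ^ m := by
    filter_upwards [hC] with y hy
    calc ‖u' y‖ ≤ C * ‖y ^ m‖ := hy
      _ ≤ C' * |y| ^ m := by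
          rw [norm_pow, Real.norm_eq_abs]
          exact mul_le_mul_of_nonneg_right (le_max_left _ _) (by positivity)
  obtain ⟨δ, hδpos, hδ⟩ := Metric.eventually_nhds_iff.1 (hder.and hC2)
  rw [isBigO_iff]
  refine ⟨C', Metric.eventually_nhds_iff.2 ⟨δ, hδpos, fun x hx => ?_⟩⟩
  rw [Real.dist_eq, sub_zero] at hx
  have habs : ∀ t ∈ Set.uIcc (0:ℝ) x, |t| ≤ |x| := by
    intro t ht
    rcases Set.mem_uIcc.1 ht with ht | ht
    · exact abs_le.2 ⟨le_trans (neg_nonpos_of_nonneg (abs_nonneg x)) ht.1,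
        le_trans ht.2 (le_abs_self x)⟩
    · exact abs_le.2 ⟨le_trans (neg_abs_le x) ht.1, le_trans ht.2 (abs_nonneg x)⟩
  have hmem : ∀ t ∈ Set.uIcc (0:ℝ) x, dist t 0 < δ := fun t ht => by
    rw [Real.dist_eq, sub_zero]; exact lt_of_le_of_lt (habs t ht) hx
  have key : ‖u x - u 0‖ ≤ (C' * |x| ^ m) * ‖x - 0‖ := by
    apply Convex.norm_image_sub_le_of_norm_hasDerivWithin_le
      (f' := u') (s := Set.uIcc 0 x)
    · intro t ht; exact (hδ (hmem t ht)).1.hasDerivWithinAt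
    · intro t ht
      refine le_trans (hδ (hmem t ht)).2 ?_
      exact mul_le_mul_of_nonneg_left (pow_le_pow_left₀ (abs_nonneg t) (habs t ht) m) hC'nn
    · exact convex_uIcc 0 x
    · exact Set.left_mem_uIcc
    · exact Set.right_mem_uIcc
  calc ‖u x‖ = ‖u x - u 0‖ := by rw [hu0, sub_zero]
    _ ≤ (C' * |x| ^ m) * ‖x - 0‖ := key
    _ = C' * (|x| ^ m * |x|) := by rw [sub_zero, Real.norm_eq_abs]; ring
    _ = C' * ‖x ^ (m+1)‖ := by rw [← pow_succ]; simp [abs_pow]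

/-- The continuous linear map `μ ↦ μ ∘ σ` on `Fin k → ℝ`. -/
noncomputable def permCLM {k : ℕ} (σ : Equiv.Perm (Fin k)) :
    (Fin k → ℝ) →L[ℝ] (Fin k → ℝ) :=
  ContinuousLinearMap.pi fun j => ContinuousLinearMap.proj (σ j)

lemma permCLM_apply {k : ℕ} (σ : Equiv.Perm (Fin k)) (μ : Fin k → ℝ) :
    permCLM σ μ = μ ∘ σ := rfl

lemma permCLM_single {k : ℕ} (σ : Equiv.Perm (Fin k)) (i : Fin k) :
    permCLM σ (Pi.single i 1) = Pi.single (σ⁻¹ i) (1:ℝ) := by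
  funext j
  simp only [permCLM_apply, Function.comp_apply, Pi.single_apply]
  by_cases hj : σ j = i
  · rw [if_pos hj, if_pos]; rw [← hj]; simp
  · rw [if_neg hj, if_neg]; intro hc; exact hj (by rw [hc]; simp)

/-- The paper's improved approximation: if `F` is interchangeable and `C³` near the
diagonal, and the perturbation `h` has zero mean, then
`F(a𝟙 + εh) = F(a𝟙) + α ε² ∑ᵢ hᵢ² + O(ε³)`, where
`α = (1/2)(∂²F/∂μ₁²(a𝟙) - ∂²F/∂μ₁∂μ₂(a𝟙))`. -/
theorem improved_approximation (k : ℕ) (hk : 2 ≤ k) (F : (Fin k → ℝ) → ℝ)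
    (hsym : ∀ (σ : Equiv.Perm (Fin k)) (μ : Fin k → ℝ), F (μ ∘ σ) = F μ)
    (a : ℝ) (hF : ContDiffAt ℝ 3 F (fun _ => a)) (α : ℝ)
    (hα : α = (1 / 2) *
      (fderiv ℝ (fderiv ℝ F) (fun _ => a) (Pi.single (⟨0, by omega⟩ : Fin k) 1)
          (Pi.single (⟨0, by omega⟩ : Fin k) 1) -
        fderiv ℝ (fderiv ℝ F) (fun _ => a) (Pi.single (⟨0, by omega⟩ : Fin k) 1)
          (Pi.single (⟨1, by omega⟩ : Fin k) 1)))
    (h : Fin k → ℝ) (hsum : ∑ i, h i = 0) :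
    (fun ε : ℝ =>
        F (fun i => a + ε * h i) - F (fun _ => a) - α * ε ^ 2 * ∑ i, (h i) ^ 2)
      =O[nhds 0] fun ε : ℝ => ε ^ 3 := by
  classical
  set c : Fin k → ℝ := fun _ => a with hc
  set D1 := fderiv ℝ F c with hD1def
  set D2 := fderiv ℝ (fderiv ℝ F) c with hD2def
  set i0 : Fin k := ⟨0, by omega⟩ with hi0
  set i1 : Fin k := ⟨1, by omega⟩ with hi1
  have hi01 : i0 ≠ i1 := by simp [hi0, hi1, Fin.ext_iff]
  -- eventual smoothness / differentiability
  have hFev : ∀ᶠ μ in nhds c, ContDiffAt ℝ 3 F μ := hF.eventually (by simp)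
  have hFdiff : ∀ᶠ μ in nhds c, DifferentiableAt ℝ F μ :=
    hFev.mono fun μ hμ => hμ.differentiableAt (by norm_num)
  have hPc : ∀ σ : Equiv.Perm (Fin k), permCLM σ c = c := fun σ => rfl
  -- eventual symmetry identity for the first derivative
  have hsymm1 : ∀ σ : Equiv.Perm (Fin k), ∀ᶠ μ in nhds c,
      fderiv ℝ F μ = (fderiv ℝ F (permCLM σ μ)).comp (permCLM σ) := by
    intro σ
    have htend : Tendsto (permCLM σ) (nhds c) (nhds c) := by
      simpa [hPc σ] using (permCLM σ).continuous.tendsto c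
    filter_upwards [hFdiff, htend.eventually hFdiff] with μ h1 h2
    have hcomp : HasFDerivAt (F ∘ (permCLM σ))
        ((fderiv ℝ F (permCLM σ μ)).comp (permCLM σ)) μ :=
      (h2.hasFDerivAt).comp μ (permCLM σ).hasFDerivAt
    have hFP : F ∘ (permCLM σ) = F := funext fun ν => hsym σ ν
    rw [hFP] at hcomp
    exact hcomp.fderiv
  -- first derivative invariance
  have hD1inv : ∀ σ : Equiv.Perm (Fin k), ∀ u, D1 (permCLM σ u) = D1 u := by
    intro σ u
    have hid := (hsymm1 σ).self_of_nhds
    rw [hPc σ] at hid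
    conv_rhs => rw [hD1def, hid]
    rfl
  -- second derivative invariance
  have hGdiff : DifferentiableAt ℝ (fderiv ℝ F) c :=
    (hF.fderiv_right (m := 2) (by norm_num)).differentiableAt (by norm_num)
  have hD2inv : ∀ σ : Equiv.Perm (Fin k), ∀ u v,
      D2 (permCLM σ u) (permCLM σ v) = D2 u v := by
    intro σ u v
    set P := permCLM σ with hP
    set R : ((Fin k → ℝ) →L[ℝ] ℝ) →L[ℝ] ((Fin k → ℝ) →L[ℝ] ℝ) :=
      (ContinuousLinearMap.compL ℝ (Fin k → ℝ) (Fin k → ℝ) ℝ).flip P with hR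
    have hEv : (fun μ => R (fderiv ℝ F (P μ))) =ᶠ[nhds c] fderiv ℝ F := by
      filter_upwards [hsymm1 σ] with μ hμ
      exact hμ.symm
    have hderG : HasFDerivAt (fun μ => R (fderiv ℝ F (P μ)))
        (R.comp (D2.comp P)) c := by
      have h1 : HasFDerivAt (fderiv ℝ F) D2 (P c) := by
        rw [hP, hPc σ]; exact hGdiff.hasFDerivAt
      exact R.hasFDerivAt.comp c (h1.comp c P.hasFDerivAt)
    have hfd : D2 = R.comp (D2.comp P) := (hEv.fderiv_eq).symm.trans hderG.fderiv
    calc D2 (P u) (P v) = (R.comp (D2.comp P)) u v := rfl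
      _ = D2 u v := by rw [← hfd]
  -- values on basis vectors
  set A := D2 (Pi.single i0 (1:ℝ)) (Pi.single i0 (1:ℝ)) with hA
  set B := D2 (Pi.single i0 (1:ℝ)) (Pi.single i1 (1:ℝ)) with hB
  have hswap : ∀ i : Fin k, (Equiv.swap i0 i)⁻¹ i0 = i := by
    intro i; simp
  have hD1e : ∀ i, D1 (Pi.single i (1:ℝ)) = D1 (Pi.single i0 (1:ℝ)) := by
    intro i
    have key := hD1inv (Equiv.swap i0 i) (Pi.single i0 (1:ℝ))
    rw [permCLM_single, hswap i] at key
    exact key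
  have hD2diag : ∀ i, D2 (Pi.single i (1:ℝ)) (Pi.single i (1:ℝ)) = A := by
    intro i
    have key := hD2inv (Equiv.swap i0 i) (Pi.single i0 (1:ℝ)) (Pi.single i0 (1:ℝ))
    rw [permCLM_single, hswap i] at key
    exact key
  have hD2off : ∀ i j, i ≠ j → D2 (Pi.single i (1:ℝ)) (Pi.single j (1:ℝ)) = B := by
    intro i j hij
    have hj'ne : i0 ≠ Equiv.swap i0 i j := by
      intro hcon
      apply hij
      have h2 := congrArg (Equiv.swap i0 i) hcon
      rw [Equiv.swap_apply_self] at h2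
      rw [← h2, Equiv.swap_apply_left]
    set τ : Equiv.Perm (Fin k) :=
      (Equiv.swap i1 (Equiv.swap i0 i j)).trans (Equiv.swap i0 i) with hτ
    have hτ0 : τ i0 = i := by
      rw [hτ]
      simp only [Equiv.trans_apply]
      rw [Equiv.swap_apply_of_ne_of_ne hi01 hj'ne, Equiv.swap_apply_left]
    have hτ1 : τ i1 = j := by
      rw [hτ]
      simp only [Equiv.trans_apply]
      rw [Equiv.swap_apply_left, Equiv.swap_apply_self]
    have key := hD2inv τ.symm (Pi.single i0 (1:ℝ)) (Pi.single i1 (1:ℝ))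
    rw [permCLM_single, permCLM_single] at key
    have h0 : (τ.symm)⁻¹ i0 = i := by
      rw [Equiv.Perm.inv_def, Equiv.symm_symm]; exact hτ0
    have h1' : (τ.symm)⁻¹ i1 = j := by
      rw [Equiv.Perm.inv_def, Equiv.symm_symm]; exact hτ1
    rw [h0, h1'] at key
    exact key
  -- expansion of h
  have hsingle : ∀ i : Fin k, h i • (Pi.single i 1 : Fin k → ℝ) = Pi.single i (h i) := fun i => by
    funext j
    by_cases hj : j = i <;> simp [Pi.single_apply, hj]
  have hrep : h = ∑ i, h i • (Pi.single i 1 : Fin k → ℝ) := by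
    conv_lhs => rw [← Finset.univ_sum_single h]
    exact Finset.sum_congr rfl fun i _ => (hsingle i).symm
  have hD1h : D1 h = 0 := by
    have hexp : D1 h = ∑ i, h i * D1 (Pi.single i (1:ℝ)) := by
      conv_lhs => rw [hrep]
      simp [map_sum, map_smul]
    rw [hexp]
    calc ∑ i, h i * D1 (Pi.single i (1:ℝ))
        = ∑ i, h i * D1 (Pi.single i0 (1:ℝ)) :=
          Finset.sum_congr rfl fun i _ => by rw [hD1e i]
      _ = (∑ i, h i) * D1 (Pi.single i0 (1:ℝ)) := by rw [Finset.sum_mul]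
      _ = 0 := by rw [hsum, zero_mul]
  have hD2hh : D2 h h = (A - B) * ∑ i, (h i) ^ 2 := by
    have hexp : D2 h h = ∑ i, h i * ∑ j, h j * D2 (Pi.single i (1:ℝ)) (Pi.single j (1:ℝ)) := by
      conv_lhs => rw [hrep]
      simp only [map_sum, map_smul, ContinuousLinearMap.coe_sum',
        ContinuousLinearMap.coe_smul', Finset.sum_apply, Pi.smul_apply,
        ContinuousLinearMap.sum_apply, ContinuousLinearMap.smul_apply, smul_eq_mul]
      simp only [Finset.mul_sum]
      rw [Finset.sum_comm]
      exact Finset.sum_congr rfl fun i _ => Finset.sum_congr rfl fun j _ => by ring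
    have hval : ∀ i j, D2 (Pi.single i (1:ℝ)) (Pi.single j (1:ℝ)) = if i = j then A else B := by
      intro i j
      by_cases hij : i = j
      · subst hij; rw [if_pos rfl]; exact hD2diag i
      · rw [if_neg hij]; exact hD2off i j hij
    have hinner : ∀ i, ∑ j, h j * D2 (Pi.single i (1:ℝ)) (Pi.single j (1:ℝ)) = (A - B) * h i := by
      intro i
      calc ∑ j, h j * D2 (Pi.single i (1:ℝ)) (Pi.single j (1:ℝ))
          = ∑ j, (h j * B + if j = i then h j * (A - B) else 0) := by
            refine Finset.sum_congr rfl fun j _ => ?_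
            rw [hval i j]
            by_cases hij : i = j
            · subst hij; simp; ring
            · rw [if_neg hij, if_neg (Ne.symm hij)]; ring
        _ = (∑ j, h j) * B + h i * (A - B) := by
            rw [Finset.sum_add_distrib, ← Finset.sum_mul,
              Finset.sum_ite_eq' Finset.univ i (fun j => h j * (A - B))]
            simp
        _ = (A - B) * h i := by rw [hsum]; ring
    rw [hexp]
    calc ∑ i, h i * ∑ j, h j * D2 (Pi.single i (1:ℝ)) (Pi.single j (1:ℝ))
        = ∑ i, h i * ((A - B) * h i) :=
          Finset.sum_congr rfl fun i _ => by rw [hinner i]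
      _ = (A - B) * ∑ i, (h i) ^ 2 := by
          rw [Finset.mul_sum]
          exact Finset.sum_congr rfl fun i _ => by ring
  -- the one-variable function
  set L : ℝ → (Fin k → ℝ) := fun ε => c + ε • h with hLdef
  have hL0 : L 0 = c := by simp [hLdef]
  have hLder : ∀ ε : ℝ, HasDerivAt L h ε := by
    intro ε
    have h1 : HasDerivAt (fun t : ℝ => t • h) ((1:ℝ) • h) ε :=
      (hasDerivAt_id ε).smul_const h
    simpa [hLdef] using h1.const_add c
  have hLcont : Tendsto L (nhds 0) (nhds c) := by
    have hLc : Continuous L := by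
      rw [hLdef]; exact continuous_const.add (continuous_id.smul continuous_const)
    simpa [hL0] using hLc.tendsto 0
  have hFevL : ∀ᶠ ε in nhds (0:ℝ), ContDiffAt ℝ 3 F (L ε) := hLcont.eventually hFev
  set g1 : ℝ → ℝ := fun ε => fderiv ℝ F (L ε) h with hg1def
  set g2 : ℝ → ℝ := fun ε => fderiv ℝ (fderiv ℝ F) (L ε) h h with hg2def
  have hgder : ∀ᶠ ε in nhds (0:ℝ), HasDerivAt (fun t => F (L t)) (g1 ε) ε := by
    filter_upwards [hFevL] with ε hε
    exact ((hε.differentiableAt (by norm_num)).hasFDerivAt).comp_hasDerivAt ε (hLder ε)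
  have hg1der : ∀ᶠ ε in nhds (0:ℝ), HasDerivAt g1 (g2 ε) ε := by
    filter_upwards [hFevL] with ε hε
    have hd : DifferentiableAt ℝ (fderiv ℝ F) (L ε) :=
      (hε.fderiv_right (m := 2) (by norm_num)).differentiableAt (by norm_num)
    have h1 : HasDerivAt (fun t => fderiv ℝ F (L t))
        (fderiv ℝ (fderiv ℝ F) (L ε) h) ε :=
      hd.hasFDerivAt.comp_hasDerivAt ε (hLder ε)
    have h2 := h1.clm_apply (hasDerivAt_const ε h)
    simpa [hg1def, hg2def] using h2
  have hg2diff : DifferentiableAt ℝ g2 0 := by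
    have hH : DifferentiableAt ℝ (fderiv ℝ (fderiv ℝ F)) (L 0) := by
      rw [hL0]
      exact ((hF.fderiv_right (m := 2) (by norm_num)).fderiv_right (m := 1)
        (by norm_num)).differentiableAt (by norm_num)
    have hLd : DifferentiableAt ℝ L 0 := (hLder 0).differentiableAt
    have h0 : DifferentiableAt ℝ (fun t => fderiv ℝ (fderiv ℝ F) (L t)) 0 :=
      DifferentiableAt.comp (g := fderiv ℝ (fderiv ℝ F)) 0 hH hLd
    exact (h0.clm_apply (differentiableAt_const h)).clm_apply (differentiableAt_const h)
  have hO1 : (fun ε => g2 ε - g2 0) =O[nhds (0:ℝ)] fun ε => ε ^ 1 := by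
    have := hg2diff.isBigO_sub
    simpa using this
  have hO2 : (fun ε => g1 ε - g1 0 - g2 0 * ε) =O[nhds (0:ℝ)] fun ε => ε ^ 2 := by
    apply isBigO_succ_of_deriv (u' := fun ε => g2 ε - g2 0)
    · simp
    · filter_upwards [hg1der] with ε hε
      have h2 : HasDerivAt (fun t : ℝ => g2 0 * t) (g2 0) ε := by
        simpa using (hasDerivAt_id ε).const_mul (g2 0)
      exact (hε.sub_const (g1 0)).sub h2
    · exact hO1
  have hO3 : (fun ε => F (L ε) - F (L 0) - g1 0 * ε - g2 0 / 2 * ε ^ 2)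
      =O[nhds (0:ℝ)] fun ε => ε ^ 3 := by
    apply isBigO_succ_of_deriv (u' := fun ε => g1 ε - g1 0 - g2 0 * ε)
    · simp
    · filter_upwards [hgder] with ε hε
      have h1 : HasDerivAt (fun t : ℝ => g1 0 * t) (g1 0) ε := by
        simpa using (hasDerivAt_id ε).const_mul (g1 0)
      have h2 : HasDerivAt (fun t : ℝ => g2 0 / 2 * t ^ 2) (g2 0 * ε) ε := by
        have h3 := (hasDerivAt_pow 2 ε).const_mul (g2 0 / 2)
        exact h3.congr_deriv (by rw [show (2:ℕ) - 1 = 1 from rfl]; push_cast; ring)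
      exact ((hε.sub_const (F (L 0))).sub h1).sub h2
    · exact hO2
  -- compute g1 0 and g2 0
  have hg10 : g1 0 = 0 := by rw [hg1def]; simp only [hL0]; exact hD1h
  have hg20 : g2 0 = (A - B) * ∑ i, (h i) ^ 2 := by
    rw [hg2def]; simp only [hL0]; exact hD2hh
  have hAB : A - B = 2 * α := by rw [hα]; ring
  -- conclude
  have hfun : (fun ε : ℝ =>
      F (fun i => a + ε * h i) - F (fun _ => a) - α * ε ^ 2 * ∑ i, (h i) ^ 2)
      = fun ε => F (L ε) - F (L 0) - g1 0 * ε - g2 0 / 2 * ε ^ 2 := by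
    funext ε
    have hLε : (fun i => a + ε * h i) = L ε := by
      funext i; simp [hLdef, hc]
    rw [hLε, hL0, hg10, hg20, hAB]
    show F (L ε) - F c - α * ε ^ 2 * ∑ i, (h i) ^ 2 = _
    ring
  rw [hfun]
  exact hO3
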